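/- Let ε ∈ (0,1) and let u, v : S¹ → ℝ^N be W^{1,1+ε} maps. Define L_ε(w) = ∫_{S¹} [(ε² + |w'|²)^((1+ε)/2) − ε^{1+ε}] dθ. Then there is a universal constant A₀ such that |L_ε(u) − L_ε(v)| ≤ A₀ (‖u'‖_{L^{1+ε}} + ‖v'‖_{L^{1+ε}})^{(1+ε)/2} ‖u − v‖_{W^{1,1+ε}}^{(1+ε)/2}. -/

import Mathlib

open Set Real MeasureTheory


lemma my_rpow_add_le_add_rpow {a b p : ℝ} (ha : 0 ≤ a) (hb : 0 ≤ b) (hp0 : 0 ≤ p) (hp1 : p ≤ 1) :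
    (a + b) ^ p ≤ a ^ p + b ^ p := by
  have h := NNReal.rpow_add_le_add_rpow a.toNNReal b.toNNReal hp0 hp1
  have h2 := NNReal.coe_le_coe.2 h
  push_cast [Real.coe_toNNReal _ ha, Real.coe_toNNReal _ hb] at h2
  exact h2

lemma my_add_rpow_le_rpow_add {a b p : ℝ} (ha : 0 ≤ a) (hb : 0 ≤ b) (hp1 : 1 ≤ p) :
    a ^ p + b ^ p ≤ (a + b) ^ p := by
  have h := NNReal.add_rpow_le_rpow_add a.toNNReal b.toNNReal hp1
  have h2 := NNReal.coe_le_coe.2 h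
  push_cast [Real.coe_toNNReal _ ha, Real.coe_toNNReal _ hb] at h2
  exact h2

lemma my_abs_rpow_sub_rpow_le {x y p : ℝ} (hx : 0 ≤ x) (hy : 0 ≤ y) (hp0 : 0 ≤ p) (hp1 : p ≤ 1) :
    |x ^ p - y ^ p| ≤ |x - y| ^ p := by
  wlog h : y ≤ x generalizing x y
  · rw [abs_sub_comm, abs_sub_comm x y]; exact this hy hx (le_of_not_ge h)
  have h1 : x ^ p ≤ (x - y) ^ p + y ^ p := by
    calc x ^ p = ((x - y) + y) ^ p := by ring_nf
    _ ≤ (x - y) ^ p + y ^ p := my_rpow_add_le_add_rpow (by linarith) hy hp0 hp1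
  have h2 : y ^ p ≤ x ^ p := Real.rpow_le_rpow hy h hp0
  rw [abs_of_nonneg (by linarith : (0:ℝ) ≤ x ^ p - y ^ p),
    abs_of_nonneg (by linarith : (0:ℝ) ≤ x - y)]
  linarith

lemma my_add_rpow_le_four {a b s : ℝ} (ha : 0 ≤ a) (hb : 0 ≤ b) (hs1 : 1 ≤ s) (hs2 : s ≤ 2) :
    (a + b) ^ s ≤ 4 * (a ^ s + b ^ s) := by
  have hmax : a + b ≤ 2 * max a b := by
    rcases le_total a b with h | h
    · rw [max_eq_right h]; linarith
    · rw [max_eq_left h]; linarith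
  have hm0 : (0:ℝ) ≤ max a b := le_max_of_le_left ha
  calc (a + b) ^ s ≤ (2 * max a b) ^ s :=
        Real.rpow_le_rpow (by linarith) hmax (by linarith)
  _ = 2 ^ s * (max a b) ^ s := Real.mul_rpow (by norm_num) hm0
  _ ≤ 4 * (a ^ s + b ^ s) := by
      have h2 : (2:ℝ) ^ s ≤ 2 ^ (2:ℝ) := Real.rpow_le_rpow_of_exponent_le (by norm_num) hs2
      have h4 : (2:ℝ) ^ (2:ℝ) = 4 := by
        rw [show (2:ℝ) = ((2:ℕ):ℝ) by norm_num, Real.rpow_natCast]; norm_num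
      have hm : (max a b) ^ s ≤ a ^ s + b ^ s := by
        rcases le_total a b with h | h
        · rw [max_eq_right h]; exact le_add_of_nonneg_left (Real.rpow_nonneg ha s)
        · rw [max_eq_left h]; exact le_add_of_nonneg_right (Real.rpow_nonneg hb s)
      have := mul_le_mul (h4 ▸ h2) hm (Real.rpow_nonneg hm0 s) (by norm_num)
      linarith

/-- Continuity estimate for the regularized length functional `L_ε` on
`W^{1,1+ε}(S¹; ℝ^N)` (the circle identified with `[0, 2π]`), where `gu`, `gv` are
the derivatives of `u`, `v`:
`|L_ε(u) − L_ε(v)| ≤ A₀ (‖u'‖_{1+ε} + ‖v'‖_{1+ε})^{(1+ε)/2} ‖u − v‖_{1,1+ε}^{(1+ε)/2}`. -/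
theorem regularized_length_continuity :
    ∃ A₀ : ℝ, 0 < A₀ ∧ ∀ (N : ℕ) (ε : ℝ), ε ∈ Ioo (0 : ℝ) 1 →
      ∀ u v gu gv : ℝ → EuclideanSpace ℝ (Fin N),
        (∀ θ, HasDerivAt u (gu θ) θ) →
        (∀ θ, HasDerivAt v (gv θ) θ) →
        IntervalIntegrable (fun θ => ‖gu θ‖ ^ (1 + ε)) volume 0 (2 * π) →
        IntervalIntegrable (fun θ => ‖gv θ‖ ^ (1 + ε)) volume 0 (2 * π) →
        |(∫ θ in (0 : ℝ)..(2 * π),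
            ((ε ^ 2 + ‖gu θ‖ ^ 2) ^ ((1 + ε) / 2) - ε ^ (1 + ε)))
          - ∫ θ in (0 : ℝ)..(2 * π),
            ((ε ^ 2 + ‖gv θ‖ ^ 2) ^ ((1 + ε) / 2) - ε ^ (1 + ε))|
        ≤ A₀ *
          ((∫ θ in (0 : ℝ)..(2 * π), ‖gu θ‖ ^ (1 + ε)) ^ (1 / (1 + ε))
            + (∫ θ in (0 : ℝ)..(2 * π), ‖gv θ‖ ^ (1 + ε)) ^ (1 / (1 + ε)))
            ^ ((1 + ε) / 2) *
          ((∫ θ in (0 : ℝ)..(2 * π),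
              (‖u θ - v θ‖ ^ (1 + ε) + ‖gu θ - gv θ‖ ^ (1 + ε)))
            ^ (1 / (1 + ε))) ^ ((1 + ε) / 2) := by
  refine ⟨2, by norm_num, ?_⟩
  rintro N ε ⟨hε0, hε1⟩ u v gu gv hu hv hgu hgv
  have hs1 : (1:ℝ) ≤ 1 + ε := by linarith
  have hs0 : (0:ℝ) < 1 + ε := by linarith
  have hsne : (1:ℝ) + ε ≠ 0 := by positivity
  have hs2 : (1:ℝ) + ε ≤ 2 := by linarith
  have hp0 : (0:ℝ) ≤ (1 + ε) / 2 := by linarith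
  have hp1 : ((1:ℝ) + ε) / 2 ≤ 1 := by linarith
  have hle : (0:ℝ) ≤ 2 * π := by positivity
  set μ : Measure ℝ := volume.restrict (Set.Ioc 0 (2 * π)) with hμ
  -- measurability
  have hgum : Measurable gu := by
    have : gu = deriv u := funext fun θ => ((hu θ).deriv).symm
    rw [this]; exact measurable_deriv u
  have hgvm : Measurable gv := by
    have : gv = deriv v := funext fun θ => ((hv θ).deriv).symm
    rw [this]; exact measurable_deriv v
  have mrpow : Measurable fun x : ℝ => x ^ (1 + ε) :=
    (Real.continuous_rpow_const (by linarith)).measurable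
  have mrpow2 : Measurable fun x : ℝ => x ^ ((1 + ε) / 2) :=
    (Real.continuous_rpow_const hp0).measurable
  have mab : Measurable fun θ => ‖gu θ‖ + ‖gv θ‖ := hgum.norm.add hgvm.norm
  have mc : Measurable fun θ => ‖gu θ - gv θ‖ := (hgum.sub hgvm).norm
  -- convert interval integrals to integrals over μ
  simp only [intervalIntegral.integral_of_le hle]
  rw [← hμ]  -- fold (may be no-op)
  -- basic integrabilities
  have hA : Integrable (fun θ => ‖gu θ‖ ^ (1 + ε)) μ := by
    rw [hμ]; exact (intervalIntegrable_iff_integrableOn_Ioc_of_le hle).mp hgu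
  have hB : Integrable (fun θ => ‖gv θ‖ ^ (1 + ε)) μ := by
    rw [hμ]; exact (intervalIntegrable_iff_integrableOn_Ioc_of_le hle).mp hgv
  have hSpt : ∀ θ, (‖gu θ‖ + ‖gv θ‖) ^ (1 + ε)
      ≤ 4 * (‖gu θ‖ ^ (1 + ε) + ‖gv θ‖ ^ (1 + ε)) := fun θ =>
    my_add_rpow_le_four (norm_nonneg _) (norm_nonneg _) hs1 hs2
  have hS : Integrable (fun θ => (‖gu θ‖ + ‖gv θ‖) ^ (1 + ε)) μ := by
    refine Integrable.mono' ((hA.add hB).const_mul 4)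
      (mrpow.comp mab).aestronglyMeasurable (ae_of_all _ fun θ => ?_)
    rw [Real.norm_of_nonneg (Real.rpow_nonneg (by positivity) _)]
    exact hSpt θ
  have hTpt : ∀ θ, ‖gu θ - gv θ‖ ^ (1 + ε) ≤ (‖gu θ‖ + ‖gv θ‖) ^ (1 + ε) := fun θ =>
    Real.rpow_le_rpow (norm_nonneg _) (norm_sub_le _ _) (by linarith)
  have hT : Integrable (fun θ => ‖gu θ - gv θ‖ ^ (1 + ε)) μ := by
    refine Integrable.mono' hS (mrpow.comp mc).aestronglyMeasurable (ae_of_all _ fun θ => ?_)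
    rw [Real.norm_of_nonneg (Real.rpow_nonneg (norm_nonneg _) _)]
    exact hTpt θ
  -- key identities
  have hid : ∀ x : ℝ, 0 ≤ x → (x ^ 2 : ℝ) ^ ((1 + ε) / 2) = x ^ (1 + ε) := by
    intro x hx
    rw [← Real.rpow_natCast x 2, ← Real.rpow_mul hx]
    norm_num
    congr 1
    ring
  have hidε : (ε ^ 2 : ℝ) ^ ((1 + ε) / 2) = ε ^ (1 + ε) := hid ε hε0.le
  -- bounds on the integrands F, G
  set F : ℝ → ℝ := fun θ => (ε ^ 2 + ‖gu θ‖ ^ 2) ^ ((1 + ε) / 2) - ε ^ (1 + ε) with hF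
  set G : ℝ → ℝ := fun θ => (ε ^ 2 + ‖gv θ‖ ^ 2) ^ ((1 + ε) / 2) - ε ^ (1 + ε) with hG
  have hFbound : ∀ (g : ℝ → EuclideanSpace ℝ (Fin N)) (θ : ℝ),
      |(ε ^ 2 + ‖g θ‖ ^ 2) ^ ((1 + ε) / 2) - ε ^ (1 + ε)| ≤ ‖g θ‖ ^ (1 + ε) := by
    intro g θ
    have h1 : (ε ^ 2 : ℝ) ^ ((1 + ε) / 2) ≤ (ε ^ 2 + ‖g θ‖ ^ 2) ^ ((1 + ε) / 2) :=
      Real.rpow_le_rpow (by positivity) (by nlinarith [norm_nonneg (g θ)]) hp0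
    have h2 : (ε ^ 2 + ‖g θ‖ ^ 2) ^ ((1 + ε) / 2)
        ≤ (ε ^ 2 : ℝ) ^ ((1 + ε) / 2) + (‖g θ‖ ^ 2 : ℝ) ^ ((1 + ε) / 2) :=
      my_rpow_add_le_add_rpow (by positivity) (by positivity) hp0 hp1
    rw [hidε] at h1 h2
    rw [hid _ (norm_nonneg _)] at h2
    rw [abs_of_nonneg (by linarith)]
    linarith
  have hFm : Measurable F := by
    apply Measurable.sub _ measurable_const
    exact mrpow2.comp (measurable_const.add (hgum.norm.pow measurable_const))
  have hGm : Measurable G := by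
    apply Measurable.sub _ measurable_const
    exact mrpow2.comp (measurable_const.add (hgvm.norm.pow measurable_const))
  have hFint : Integrable F μ := by
    refine Integrable.mono' hA hFm.aestronglyMeasurable (ae_of_all _ fun θ => ?_)
    simpa [Real.norm_eq_abs] using hFbound gu θ
  have hGint : Integrable G μ := by
    refine Integrable.mono' hB hGm.aestronglyMeasurable (ae_of_all _ fun θ => ?_)
    simpa [Real.norm_eq_abs] using hFbound gv θ
  -- pointwise key estimate
  have hkey : ∀ θ, |F θ - G θ|
      ≤ (‖gu θ‖ + ‖gv θ‖) ^ ((1 + ε) / 2) * ‖gu θ - gv θ‖ ^ ((1 + ε) / 2) := by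
    intro θ
    have h0 : F θ - G θ
        = (ε ^ 2 + ‖gu θ‖ ^ 2) ^ ((1 + ε) / 2) - (ε ^ 2 + ‖gv θ‖ ^ 2) ^ ((1 + ε) / 2) := by
      simp [hF, hG]
    have h1 : |F θ - G θ| ≤ |‖gu θ‖ ^ 2 - ‖gv θ‖ ^ 2| ^ ((1 + ε) / 2) := by
      rw [h0]
      have := my_abs_rpow_sub_rpow_le (x := ε ^ 2 + ‖gu θ‖ ^ 2) (y := ε ^ 2 + ‖gv θ‖ ^ 2)
        (by positivity) (by positivity) hp0 hp1
      simpa using this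
    have h2 : |‖gu θ‖ ^ 2 - ‖gv θ‖ ^ 2| ≤ (‖gu θ‖ + ‖gv θ‖) * ‖gu θ - gv θ‖ := by
      have habs : |‖gu θ‖ - ‖gv θ‖| ≤ ‖gu θ - gv θ‖ := abs_norm_sub_norm_le _ _
      have : |‖gu θ‖ ^ 2 - ‖gv θ‖ ^ 2| = (‖gu θ‖ + ‖gv θ‖) * |‖gu θ‖ - ‖gv θ‖| := by
        rw [← abs_of_nonneg (by positivity : (0:ℝ) ≤ ‖gu θ‖ + ‖gv θ‖), ← abs_mul]
        ring_nf
      rw [this]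
      exact mul_le_mul_of_nonneg_left habs (by positivity)
    calc |F θ - G θ| ≤ |‖gu θ‖ ^ 2 - ‖gv θ‖ ^ 2| ^ ((1 + ε) / 2) := h1
      _ ≤ ((‖gu θ‖ + ‖gv θ‖) * ‖gu θ - gv θ‖) ^ ((1 + ε) / 2) :=
        Real.rpow_le_rpow (abs_nonneg _) h2 hp0
      _ = (‖gu θ‖ + ‖gv θ‖) ^ ((1 + ε) / 2) * ‖gu θ - gv θ‖ ^ ((1 + ε) / 2) :=
        Real.mul_rpow (by positivity) (norm_nonneg _)
  -- Memℒp facts for Hölder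
  have hsq : ∀ x : ℝ, 0 ≤ x → (x ^ ((1 + ε) / 2)) ^ (2:ℕ) = x ^ (1 + ε) := by
    intro x hx
    rw [← Real.rpow_natCast (x ^ ((1 + ε) / 2)) 2, ← Real.rpow_mul hx]
    norm_num
  have hF2 : MemLp (fun θ => (‖gu θ‖ + ‖gv θ‖) ^ ((1 + ε) / 2)) 2 μ := by
    refine (memLp_two_iff_integrable_sq (mrpow2.comp mab).aestronglyMeasurable).2 ?_
    refine hS.congr ?_
    refine ae_of_all _ fun θ => ?_
    exact (hsq _ (by positivity)).symm
  have hG2 : MemLp (fun θ => ‖gu θ - gv θ‖ ^ ((1 + ε) / 2)) 2 μ := by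
    refine (memLp_two_iff_integrable_sq (mrpow2.comp mc).aestronglyMeasurable).2 ?_
    refine hT.congr ?_
    refine ae_of_all _ fun θ => ?_
    exact (hsq _ (norm_nonneg _)).symm
  have hH : Integrable
      (fun θ => (‖gu θ‖ + ‖gv θ‖) ^ ((1 + ε) / 2) * ‖gu θ - gv θ‖ ^ ((1 + ε) / 2)) μ := by
    refine Integrable.mono' ((hF2.integrable_sq.add hG2.integrable_sq).const_mul (1/2))
      ((mrpow2.comp mab).mul (mrpow2.comp mc)).aestronglyMeasurable (ae_of_all _ fun θ => ?_)
    rw [Real.norm_of_nonneg (by positivity)]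
    simp only [Pi.add_apply]
    nlinarith [sq_nonneg ((‖gu θ‖ + ‖gv θ‖) ^ ((1 + ε) / 2) - ‖gu θ - gv θ‖ ^ ((1 + ε) / 2))]
  -- Step 1: |∫F − ∫G| ≤ ∫ h
  have step1 : |(∫ θ, F θ ∂μ) - ∫ θ, G θ ∂μ|
      ≤ ∫ θ, (‖gu θ‖ + ‖gv θ‖) ^ ((1 + ε) / 2) * ‖gu θ - gv θ‖ ^ ((1 + ε) / 2) ∂μ := by
    rw [← integral_sub hFint hGint]
    refine le_trans ?_ (integral_mono (hFint.sub hGint).abs hH fun θ => hkey θ)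
    simpa [Real.norm_eq_abs] using norm_integral_le_integral_norm (μ := μ) (f := fun θ => F θ - G θ)
  -- Step 2: Hölder (Cauchy–Schwarz)
  have hpq : Real.HolderConjugate 2 2 := Real.holderConjugate_iff.mpr ⟨by norm_num, by norm_num⟩
  have step2 : ∫ θ, (‖gu θ‖ + ‖gv θ‖) ^ ((1 + ε) / 2) * ‖gu θ - gv θ‖ ^ ((1 + ε) / 2) ∂μ
      ≤ (∫ θ, (‖gu θ‖ + ‖gv θ‖) ^ (1 + ε) ∂μ) ^ (1/2 : ℝ)
        * (∫ θ, ‖gu θ - gv θ‖ ^ (1 + ε) ∂μ) ^ (1/2 : ℝ) := by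
    have h := MeasureTheory.integral_mul_le_Lp_mul_Lq_of_nonneg (μ := μ) hpq
      (f := fun θ => (‖gu θ‖ + ‖gv θ‖) ^ ((1 + ε) / 2))
      (g := fun θ => ‖gu θ - gv θ‖ ^ ((1 + ε) / 2))
      (ae_of_all _ fun θ => by positivity) (ae_of_all _ fun θ => by positivity)
      (by rw [show ENNReal.ofReal 2 = 2 by norm_num]; exact hF2)
      (by rw [show ENNReal.ofReal 2 = 2 by norm_num]; exact hG2)
    have e1 : ∀ x : ℝ, 0 ≤ x → (x ^ ((1 + ε) / 2)) ^ (2:ℝ) = x ^ (1 + ε) := by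
      intro x hx
      rw [← Real.rpow_mul hx]; norm_num
    calc ∫ θ, (‖gu θ‖ + ‖gv θ‖) ^ ((1 + ε) / 2) * ‖gu θ - gv θ‖ ^ ((1 + ε) / 2) ∂μ
        ≤ (∫ θ, ((‖gu θ‖ + ‖gv θ‖) ^ ((1 + ε) / 2)) ^ (2:ℝ) ∂μ) ^ (1/2 : ℝ)
          * (∫ θ, (‖gu θ - gv θ‖ ^ ((1 + ε) / 2)) ^ (2:ℝ) ∂μ) ^ (1/2 : ℝ) := h
      _ = (∫ θ, (‖gu θ‖ + ‖gv θ‖) ^ (1 + ε) ∂μ) ^ (1/2 : ℝ)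
          * (∫ θ, ‖gu θ - gv θ‖ ^ (1 + ε) ∂μ) ^ (1/2 : ℝ) := by
          congr 2
          · exact integral_congr_ae (ae_of_all _ fun θ => e1 _ (by positivity))
          · exact integral_congr_ae (ae_of_all _ fun θ => e1 _ (norm_nonneg _))
  -- notation for the target quantities
  set A := ∫ θ, ‖gu θ‖ ^ (1 + ε) ∂μ with hAdef
  set B := ∫ θ, ‖gv θ‖ ^ (1 + ε) ∂μ with hBdef
  set X := ∫ θ, (‖u θ - v θ‖ ^ (1 + ε) + ‖gu θ - gv θ‖ ^ (1 + ε)) ∂μ with hXdef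
  have hA0 : 0 ≤ A := integral_nonneg fun θ => Real.rpow_nonneg (norm_nonneg _) _
  have hB0 : 0 ≤ B := integral_nonneg fun θ => Real.rpow_nonneg (norm_nonneg _) _
  have hX0 : 0 ≤ X := integral_nonneg fun θ => by positivity
  set M := A ^ (1 / (1 + ε)) + B ^ (1 / (1 + ε)) with hMdef
  have hM0 : 0 ≤ M := by positivity
  -- Step 3 : ∫ (a+b)^s ≤ 4 M^s
  have step3 : ∫ θ, (‖gu θ‖ + ‖gv θ‖) ^ (1 + ε) ∂μ ≤ 4 * M ^ (1 + ε) := by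
    have h1 : ∫ θ, (‖gu θ‖ + ‖gv θ‖) ^ (1 + ε) ∂μ ≤ 4 * (A + B) := by
      have h := integral_mono hS ((hA.add hB).const_mul 4) hSpt
      rw [integral_const_mul] at h
      have e : ∫ a, (‖gu a‖ ^ (1 + ε) + ‖gv a‖ ^ (1 + ε)) ∂μ = A + B := integral_add hA hB
      simp only [Pi.add_apply] at h
      rw [e] at h
      exact h
    have hAe : (A ^ (1 / (1 + ε))) ^ (1 + ε) = A := by
      rw [← Real.rpow_mul hA0]; field_simp; exact Real.rpow_one A
    have hBe : (B ^ (1 / (1 + ε))) ^ (1 + ε) = B := by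
      rw [← Real.rpow_mul hB0]; field_simp; exact Real.rpow_one B
    have h2 : A + B ≤ M ^ (1 + ε) := by
      have := my_add_rpow_le_rpow_add (a := A ^ (1 / (1 + ε))) (b := B ^ (1 / (1 + ε)))
        (by positivity) (by positivity) hs1
      rw [hAe, hBe] at this
      exact this
    linarith
  -- Step 4 : ∫ c^s ≤ X
  have hucont : Continuous u := by
    rw [continuous_iff_continuousAt]; exact fun θ => (hu θ).continuousAt
  have hvcont : Continuous v := by
    rw [continuous_iff_continuousAt]; exact fun θ => (hv θ).continuousAt
  have hq : Integrable (fun θ => ‖u θ - v θ‖ ^ (1 + ε)) μ := by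
    rw [hμ]
    exact (((hucont.sub hvcont).norm.rpow_const fun x => Or.inr (by linarith)).integrableOn_Ioc)
  have step4 : ∫ θ, ‖gu θ - gv θ‖ ^ (1 + ε) ∂μ ≤ X := by
    refine integral_mono hT (hq.add hT) fun θ => ?_
    exact le_add_of_nonneg_left (by positivity)
  have hT0 : 0 ≤ ∫ θ, ‖gu θ - gv θ‖ ^ (1 + ε) ∂μ :=
    integral_nonneg fun θ => Real.rpow_nonneg (norm_nonneg _) _
  have hS0 : 0 ≤ ∫ θ, (‖gu θ‖ + ‖gv θ‖) ^ (1 + ε) ∂μ :=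
    integral_nonneg fun θ => Real.rpow_nonneg (by positivity) _
  -- assemble
  have main : |(∫ θ, F θ ∂μ) - ∫ θ, G θ ∂μ|
      ≤ 2 * M ^ ((1 + ε) / 2) * X ^ (1/2 : ℝ) := by
    have c1 : (∫ θ, (‖gu θ‖ + ‖gv θ‖) ^ (1 + ε) ∂μ) ^ (1/2 : ℝ)
        ≤ 2 * M ^ ((1 + ε) / 2) := by
      have h1 : (∫ θ, (‖gu θ‖ + ‖gv θ‖) ^ (1 + ε) ∂μ) ^ (1/2 : ℝ)
          ≤ (4 * M ^ (1 + ε)) ^ (1/2 : ℝ) := Real.rpow_le_rpow hS0 step3 (by norm_num)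
      have h2 : ((4:ℝ) * M ^ (1 + ε)) ^ (1/2 : ℝ)
          = 4 ^ (1/2 : ℝ) * (M ^ (1 + ε)) ^ (1/2 : ℝ) :=
        Real.mul_rpow (by norm_num) (Real.rpow_nonneg hM0 _)
      have h3 : ((4:ℝ)) ^ (1/2 : ℝ) = 2 := by
        rw [show (4:ℝ) = 2 ^ (2:ℕ) by norm_num, ← Real.rpow_natCast 2 2, ← Real.rpow_mul
          (by norm_num)]
        norm_num
      have h4 : (M ^ (1 + ε)) ^ (1/2 : ℝ) = M ^ ((1 + ε) / 2) := by
        rw [← Real.rpow_mul hM0]; congr 1; ring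
      rw [h2, h3, h4] at h1
      exact h1
    have c2 : (∫ θ, ‖gu θ - gv θ‖ ^ (1 + ε) ∂μ) ^ (1/2 : ℝ) ≤ X ^ (1/2 : ℝ) :=
      Real.rpow_le_rpow hT0 step4 (by norm_num)
    calc |(∫ θ, F θ ∂μ) - ∫ θ, G θ ∂μ|
        ≤ ∫ θ, (‖gu θ‖ + ‖gv θ‖) ^ ((1 + ε) / 2) * ‖gu θ - gv θ‖ ^ ((1 + ε) / 2) ∂μ := step1
      _ ≤ (∫ θ, (‖gu θ‖ + ‖gv θ‖) ^ (1 + ε) ∂μ) ^ (1/2 : ℝ)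
          * (∫ θ, ‖gu θ - gv θ‖ ^ (1 + ε) ∂μ) ^ (1/2 : ℝ) := step2
      _ ≤ (2 * M ^ ((1 + ε) / 2)) * X ^ (1/2 : ℝ) := by
          refine mul_le_mul c1 c2 (Real.rpow_nonneg hT0 _) (by positivity)
      _ = 2 * M ^ ((1 + ε) / 2) * X ^ (1/2 : ℝ) := by ring
  -- finish: rewrite the RHS
  have hXexp : (X ^ (1 / (1 + ε))) ^ ((1 + ε) / 2) = X ^ (1/2 : ℝ) := by
    rw [← Real.rpow_mul hX0]
    congr 1
    field_simp
  rw [hXexp]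
  exact main
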